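/- Let p be an odd prime, G = Z_p, and let S be a (p, m, lambda, mu)-Gaussian difference set for G, and let F be the G-harmonic frame for C^m generated by S. Then either (1) p is congruent to 3 mod 4, S is a (p, m, lambda)-difference set for G (in particular lambda = mu), and F is an equiangular tight frame; or (2) p is congruent to 1 mod 4, lambda = mu, S is a (p, m, lambda)-difference set for G, and F is an equiangular tight frame; or (3) p is congruent to 1 mod 4, lambda != mu, and F is a biangular tight frame whose two frame angles are (1/m) * sqrt( (m - lambda) + (lambda - mu)*(1 +/ - sqrt(p))/2 ), each with frame angle multiplicity (p-1)/2. -/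

import Mathlib

open Finset

/-- The character `ρ_x(y) = exp(2πi x y / p)` of `G = ZMod p`. -/
noncomputable def rhoZ (p : ℕ) (x y : ZMod p) : ℂ :=
  Complex.exp (2 * (Real.pi : ℂ) * Complex.I * ((x.val : ℂ) * (y.val : ℂ) / (p : ℂ)))

/-- The vector `f_x = (1/√m) (ρ_{g_j}(x))_{j=1}^m` of the `ZMod p`-harmonic frame
generated by `S = {g_1, ..., g_m}`. -/
noncomputable def harmZ (p : ℕ) {m : ℕ} (g : Fin m → ZMod p) (x : ZMod p) :
    EuclideanSpace ℂ (Fin m) :=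
  (WithLp.equiv 2 (Fin m → ℂ)).symm fun j => ((Real.sqrt m : ℝ) : ℂ)⁻¹ * rhoZ p (g j) x

/-- The frame angle `|⟨f_x, f_y⟩|`. -/
noncomputable def angZ (p : ℕ) {m : ℕ} (g : Fin m → ZMod p) (x y : ZMod p) : ℝ :=
  ‖(inner ℂ (harmZ p g x) (harmZ p g y) : ℂ)‖

/-- The set of frame angles `Θ = { |⟨f_x, f_y⟩| : x ≠ y }` of the harmonic frame. -/
noncomputable def anglesSetZ (p : ℕ) {m : ℕ} (g : Fin m → ZMod p) : Set ℝ :=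
  {r : ℝ | ∃ x y : ZMod p, x ≠ y ∧ angZ p g x y = r}

/-- The harmonic frame is a tight frame (with the forced constant `n/m = p/m`):
`∑_x f_x ⊗ f_x^* = (p/m) I_m` as operators. -/
noncomputable def IsTightHarmZ (p : ℕ) [NeZero p] {m : ℕ} (g : Fin m → ZMod p) : Prop :=
  ∀ v : EuclideanSpace ℂ (Fin m),
    ∑ x : ZMod p, (inner ℂ (harmZ p g x) v : ℂ) • harmZ p g x = ((p : ℂ) / (m : ℂ)) • v

/-- `diffCount g x` is the number of ways to write `x = g_a - g_b` with `g_a ≠ g_b`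
distinct elements of `S = {g_1, ..., g_m}`. -/
noncomputable def diffCount {G : Type*} [AddCommGroup G] {m : ℕ} (g : Fin m → G) (x : G) : ℕ :=
  Nat.card {q : Fin m × Fin m // q.1 ≠ q.2 ∧ g q.1 - g q.2 = x}

/-- The set `R⁽²⁾_p = { z² : z ∈ (ZMod p)* }` of quadratic residues mod `p`. -/
def quadRes (p : ℕ) : Set (ZMod p) := {x | ∃ z : ZMod p, z ≠ 0 ∧ z ^ 2 = x}

/-- The set `R⁽⁴⁾_p = { z⁴ : z ∈ (ZMod p)* }` of quartic residues mod `p`. -/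
def quartRes (p : ℕ) : Set (ZMod p) := {x | ∃ z : ZMod p, z ≠ 0 ∧ z ^ 4 = x}

section AuxiliaryLemmas

section Aux

variable {p : ℕ} [NeZero p] {m : ℕ}

lemma rhoZ_eq (a x : ZMod p) : rhoZ p a x = ZMod.stdAddChar (a * x) := by
  have : (a * x : ZMod p) = ((a.val * x.val : ℕ) : ZMod p) := by
    push_cast [ZMod.natCast_zmod_val]; ring
  rw [this, show ((a.val * x.val : ℕ) : ZMod p) = ((a.val * x.val : ℤ) : ZMod p) by push_cast; ring,
    ZMod.stdAddChar_coe, rhoZ]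
  congr 1
  push_cast
  ring

lemma conj_stdAddChar (a : ZMod p) :
    (starRingEnd ℂ) (ZMod.stdAddChar a) = ZMod.stdAddChar (-a) := by
  rw [ZMod.stdAddChar_apply, ZMod.stdAddChar_apply, ← Circle.coe_inv_eq_conj,
    ← AddChar.map_neg_eq_inv]

lemma sum_stdAddChar_mul (hp : p.Prime) (b : ZMod p) :
    ∑ x : ZMod p, ZMod.stdAddChar (b * x) = if b = 0 then (p : ℂ) else 0 := by
  haveI : Fact p.Prime := ⟨hp⟩
  have := AddChar.sum_mulShift (R := ZMod p) (R' := ℂ) b (ZMod.isPrimitive_stdAddChar p)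
  simp only [mul_comm] at this ⊢
  rw [this, ZMod.card]
  split_ifs <;> simp

lemma sqrt_inv_sq (hm : 0 < m) :
    ((Real.sqrt m : ℝ) : ℂ)⁻¹ * ((Real.sqrt m : ℝ) : ℂ)⁻¹ = (m : ℂ)⁻¹ := by
  rw [← mul_inv]; norm_cast
  rw [Real.mul_self_sqrt (by positivity)]; push_cast; ring

lemma inner_harm (hm : 0 < m) (g : Fin m → ZMod p) (x y : ZMod p) :
    (inner ℂ (harmZ p g x) (harmZ p g y) : ℂ)
      = (m : ℂ)⁻¹ * ∑ j, ZMod.stdAddChar (g j * (y - x)) := by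
  rw [PiLp.inner_apply]
  simp only [harmZ, WithLp.equiv_symm_apply, PiLp.toLp_apply, RCLike.inner_apply, map_mul, rhoZ_eq,
    conj_stdAddChar, map_inv₀, Complex.conj_ofReal, mul_sum]
  refine Finset.sum_congr rfl fun j _ => ?_
  have h3 : ZMod.stdAddChar (-(g j * x)) * ZMod.stdAddChar (g j * y)
      = ZMod.stdAddChar (g j * (y - x)) := by
    rw [← AddChar.map_add_eq_mul]; ring_nf
  rw [mul_mul_mul_comm, sqrt_inv_sq hm, mul_comm (ZMod.stdAddChar (g j * y)), h3]

lemma tightHarm (hp : p.Prime) (hm : 0 < m) (g : Fin m → ZMod p)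
    (hg : Function.Injective g) (v : EuclideanSpace ℂ (Fin m)) :
    ∑ x : ZMod p, (inner ℂ (harmZ p g x) v : ℂ) • harmZ p g x = ((p : ℂ) / (m : ℂ)) • v := by
  ext j
  rw [PiLp.smul_apply]
  rw [WithLp.ofLp_sum, Finset.sum_apply]
  have hinner : ∀ x : ZMod p, (inner ℂ (harmZ p g x) v : ℂ)
      = ∑ k, ((Real.sqrt m : ℝ) : ℂ)⁻¹ * ZMod.stdAddChar (-(g k * x)) * v k := by
    intro x
    rw [PiLp.inner_apply]
    refine Finset.sum_congr rfl fun k _ => ?_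
    simp only [harmZ, WithLp.equiv_symm_apply, PiLp.toLp_apply, RCLike.inner_apply, map_mul, rhoZ_eq,
      conj_stdAddChar, map_inv₀, Complex.conj_ofReal]
    rw [mul_comm]
  have key : ∀ k, ∑ x : ZMod p, ZMod.stdAddChar (-(g k * x)) * ZMod.stdAddChar (g j * x)
      = if k = j then (p : ℂ) else 0 := by
    intro k
    have h1 : ∀ x : ZMod p, ZMod.stdAddChar (-(g k * x)) * ZMod.stdAddChar (g j * x)
        = ZMod.stdAddChar ((g j - g k) * x) := by
      intro x; rw [← AddChar.map_add_eq_mul]; ring_nf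
    simp_rw [h1, sum_stdAddChar_mul hp]
    have h2 : g j - g k = 0 ↔ k = j := by
      rw [sub_eq_zero]; exact ⟨fun h => (hg h).symm, fun h => by rw [h]⟩
    simp_rw [h2]
  calc ∑ x : ZMod p, (inner ℂ (harmZ p g x) v : ℂ) * (harmZ p g x) j
      = ∑ x : ZMod p, ∑ k, (((Real.sqrt m : ℝ) : ℂ)⁻¹ * ZMod.stdAddChar (-(g k * x)) * v k)
          * (((Real.sqrt m : ℝ) : ℂ)⁻¹ * ZMod.stdAddChar (g j * x)) := by
        refine Finset.sum_congr rfl fun x _ => ?_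
        rw [hinner x, Finset.sum_mul]
        congr 1
        simp only [harmZ, WithLp.equiv_symm_apply, PiLp.toLp_apply, rhoZ_eq]
    _ = ∑ k, (m : ℂ)⁻¹ * v k *
          ∑ x : ZMod p, ZMod.stdAddChar (-(g k * x)) * ZMod.stdAddChar (g j * x) := by
        rw [Finset.sum_comm]
        refine Finset.sum_congr rfl fun k _ => ?_
        rw [Finset.mul_sum]
        refine Finset.sum_congr rfl fun x _ => ?_
        rw [← sqrt_inv_sq hm]; ring
    _ = (m : ℂ)⁻¹ * v j * p := by
        simp_rw [key, mul_ite, mul_zero]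
        rw [Finset.sum_ite_eq' Finset.univ j (fun k => (m:ℂ)⁻¹ * v k * (p:ℂ))]
        simp
    _ = ((p : ℂ) / (m : ℂ)) * v j := by ring

lemma diffCount_card (g : Fin m → ZMod p) (d : ZMod p) :
    diffCount g d
      = (univ.filter (fun q : Fin m × Fin m => q.1 ≠ q.2 ∧ g q.1 - g q.2 = d)).card := by
  rw [diffCount, Nat.card_eq_fintype_card, Fintype.card_subtype]

lemma sum_offdiag (g : Fin m → ZMod p) (f : ZMod p → ℂ) :
    ∑ q ∈ univ.filter (fun q : Fin m × Fin m => q.1 ≠ q.2), f (g q.1 - g q.2)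
      = ∑ d : ZMod p, (diffCount g d : ℂ) * f d := by
  rw [← Finset.sum_fiberwise_of_maps_to
    (g := fun q : Fin m × Fin m => g q.1 - g q.2) (t := univ) (fun q _ => Finset.mem_univ _)]
  refine Finset.sum_congr rfl fun d _ => ?_
  rw [Finset.filter_filter]
  have hcongr : ∑ q ∈ univ.filter (fun q : Fin m × Fin m => q.1 ≠ q.2 ∧ g q.1 - g q.2 = d),
      f (g q.1 - g q.2)
      = ∑ _q ∈ univ.filter (fun q : Fin m × Fin m => q.1 ≠ q.2 ∧ g q.1 - g q.2 = d), f d :=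
    Finset.sum_congr rfl fun q hq => by rw [(Finset.mem_filter.mp hq).2.2]
  rw [hcongr, Finset.sum_const, diffCount_card, nsmul_eq_mul]

lemma base_identity (hp : p.Prime) (hm : 0 < m) (g : Fin m → ZMod p) (x y : ZMod p) :
    (m : ℂ)^2 * ((angZ p g x y : ℝ) : ℂ)^2
      = (m : ℂ) + ∑ d : ZMod p, (diffCount g d : ℂ) * ZMod.stdAddChar (d * (y - x)) := by
  set t := y - x with ht
  have hmne : (m : ℂ) ≠ 0 := by exact_mod_cast hm.ne'
  set z : ℂ := (inner ℂ (harmZ p g x) (harmZ p g y) : ℂ) with hz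
  have h1 : ((angZ p g x y : ℝ) : ℂ)^2 = z * (starRingEnd ℂ) z := by
    rw [angZ, ← hz, Complex.mul_conj]
    norm_cast
    rw [Complex.sq_norm]
  have hS : z = (m : ℂ)⁻¹ * ∑ j, ZMod.stdAddChar (g j * t) := inner_harm hm g x y
  have hSc : (starRingEnd ℂ) z = (m : ℂ)⁻¹ * ∑ k, ZMod.stdAddChar (-(g k * t)) := by
    rw [hS, map_mul, map_inv₀, map_sum]
    simp only [Complex.conj_natCast, conj_stdAddChar]
  have h3 : ∀ j k : Fin m, ZMod.stdAddChar (g j * t) * ZMod.stdAddChar (-(g k * t))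
      = ZMod.stdAddChar ((g j - g k) * t) := by
    intro j k; rw [← AddChar.map_add_eq_mul]; ring_nf
  have hconv : ∑ q : Fin m × Fin m, ZMod.stdAddChar ((g q.1 - g q.2) * t)
      = (∑ j, ZMod.stdAddChar (g j * t)) * ∑ k, ZMod.stdAddChar (-(g k * t)) := by
    rw [Finset.sum_mul_sum, Fintype.sum_prod_type]
    exact Finset.sum_congr rfl fun j _ => Finset.sum_congr rfl fun k _ => (h3 j k).symm
  have h2 : (m : ℂ)^2 * (z * (starRingEnd ℂ) z)
      = ∑ q : Fin m × Fin m, ZMod.stdAddChar ((g q.1 - g q.2) * t) := by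
    rw [hSc, hS, hconv]; field_simp
  rw [h1, h2]
  rw [← Finset.sum_filter_add_sum_filter_not univ (fun q : Fin m × Fin m => q.1 = q.2)]
  congr 1
  · have hdiag : univ.filter (fun q : Fin m × Fin m => q.1 = q.2)
        = (univ : Finset (Fin m)).diag := by
      ext q; simp [Finset.mem_diag]
    have hcongr : ∑ q ∈ univ.filter (fun q : Fin m × Fin m => q.1 = q.2),
        ZMod.stdAddChar ((g q.1 - g q.2) * t)
        = ∑ _q ∈ univ.filter (fun q : Fin m × Fin m => q.1 = q.2), (1 : ℂ) :=
      Finset.sum_congr rfl fun q hq => by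
        rw [(Finset.mem_filter.mp hq).2, sub_self, zero_mul, AddChar.map_zero_eq_one]
    rw [hcongr, Finset.sum_const, hdiag, Finset.diag_card, Finset.card_univ,
      Fintype.card_fin, nsmul_eq_mul, mul_one]
  · exact sum_offdiag g (fun d => ZMod.stdAddChar (d * t))

end Aux

section Aux2
variable {p : ℕ} [Fact p.Prime] {m : ℕ}

lemma ringChar_ne_two (hp2 : p ≠ 2) : ringChar (ZMod p) ≠ 2 := by
  rw [ZMod.ringChar_zmod_n]; exact hp2

lemma gauss_shift {t : ZMod p} (ht : t ≠ 0) :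
    ∑ d : ZMod p, ((quadraticChar (ZMod p) d : ℤ) : ℂ) * ZMod.stdAddChar (d * t)
      = ((quadraticChar (ZMod p) t : ℤ) : ℂ)
        * gaussSum ((quadraticChar (ZMod p)).ringHomComp (Int.castRingHom ℂ))
            ZMod.stdAddChar := by
  set χc := (quadraticChar (ZMod p)).ringHomComp (Int.castRingHom ℂ) with hχc
  have hcoe : ∀ d : ZMod p, χc d = ((quadraticChar (ZMod p) d : ℤ) : ℂ) := fun d => rfl
  have hu := gaussSum_mulShift χc ZMod.stdAddChar (Units.mk0 t ht)
  have hshift : gaussSum χc (AddChar.mulShift ZMod.stdAddChar (Units.mk0 t ht))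
      = ∑ d : ZMod p, ((quadraticChar (ZMod p) d : ℤ) : ℂ) * ZMod.stdAddChar (d * t) := by
    rw [gaussSum]
    refine Finset.sum_congr rfl fun d _ => ?_
    rw [AddChar.mulShift_apply, hcoe]
    norm_num [mul_comm]
  have hsq : ((quadraticChar (ZMod p) t : ℤ) : ℂ) * ((quadraticChar (ZMod p) t : ℤ) : ℂ) = 1 := by
    have := quadraticChar_sq_one (F := ZMod p) ht
    rw [pow_two] at this
    exact_mod_cast congrArg (fun z : ℤ => (z : ℂ)) this
  rw [hshift, hcoe] at hu
  have hut : ((Units.mk0 t ht : (ZMod p)ˣ) : ZMod p) = t := rfl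
  rw [hut] at hu
  calc ∑ d : ZMod p, ((quadraticChar (ZMod p) d : ℤ) : ℂ) * ZMod.stdAddChar (d * t)
      = (((quadraticChar (ZMod p) t : ℤ) : ℂ) * ((quadraticChar (ZMod p) t : ℤ) : ℂ))
        * ∑ d : ZMod p, ((quadraticChar (ZMod p) d : ℤ) : ℂ) * ZMod.stdAddChar (d * t) := by
        rw [hsq, one_mul]
    _ = _ := by rw [mul_assoc, hu]

lemma diffCount_zero (g : Fin m → ZMod p) (hg : Function.Injective g) :
    diffCount g 0 = 0 := by
  haveI : IsEmpty {q : Fin m × Fin m // q.1 ≠ q.2 ∧ g q.1 - g q.2 = 0} :=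
    ⟨fun ⟨q, hne, hdq⟩ => hne (hg (sub_eq_zero.mp hdq))⟩
  rw [diffCount, Nat.card_of_isEmpty]

lemma eval_sum (hp : p.Prime) (hp2 : p ≠ 2) (g : Fin m → ZMod p) (hg : Function.Injective g)
    (lam mu : ℕ)
    (hlam : ∀ x ∈ insert (0 : ZMod p) (quadRes p), x ≠ 0 → diffCount g x = lam)
    (hmu : ∀ x : ZMod p, x ∉ insert (0 : ZMod p) (quadRes p) → diffCount g x = mu)
    {t : ZMod p} (ht : t ≠ 0) :
    2 * ∑ d : ZMod p, (diffCount g d : ℂ) * ZMod.stdAddChar (d * t)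
      = -((lam : ℂ) + mu) + ((lam : ℂ) - mu) * ((quadraticChar (ZMod p) t : ℤ) : ℂ)
          * gaussSum ((quadraticChar (ZMod p)).ringHomComp (Int.castRingHom ℂ))
              ZMod.stdAddChar := by
  have hterm : ∀ d : ZMod p,
      2 * ((diffCount g d : ℂ) * ZMod.stdAddChar (d * t))
        = ((lam : ℂ) + mu) * (ZMod.stdAddChar (d * t) - if d = 0 then 1 else 0)
          + ((lam : ℂ) - mu) * (((quadraticChar (ZMod p) d : ℤ) : ℂ) * ZMod.stdAddChar (d * t))
      := by
    intro d
    by_cases hd : d = 0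
    · subst hd
      simp [diffCount_zero g hg, quadraticChar_zero]
    · by_cases hres : d ∈ quadRes p
      · have h1 : diffCount g d = lam := hlam d (Set.mem_insert_of_mem _ hres) hd
        have h2 : quadraticChar (ZMod p) d = 1 := by
          refine (quadraticChar_one_iff_isSquare hd).mpr ?_
          obtain ⟨z, _, hz⟩ := hres
          exact ⟨z, by rw [← hz]; ring⟩
        rw [h1, h2]
        simp only [hd, if_neg, if_false, Int.cast_one, one_mul]
        ring
      · have hnotin : d ∉ insert (0 : ZMod p) (quadRes p) := by
          simp only [Set.mem_insert_iff]
          push_neg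
          exact ⟨hd, hres⟩
        have h1 : diffCount g d = mu := hmu d hnotin
        have h2 : quadraticChar (ZMod p) d = -1 := by
          refine quadraticChar_neg_one_iff_not_isSquare.mpr ?_
          rintro ⟨r, hr⟩
          refine hres ⟨r, fun h0 => hd (by rw [hr, h0]; ring), by rw [hr]; ring⟩
        rw [h1, h2]
        simp only [hd, if_neg, if_false]
        push_cast
        ring
  rw [Finset.mul_sum]
  rw [Finset.sum_congr rfl fun d _ => hterm d]
  rw [Finset.sum_add_distrib, ← Finset.mul_sum, ← Finset.mul_sum, Finset.sum_sub_distrib]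
  have hz : ∑ d : ZMod p, ZMod.stdAddChar (d * t) = 0 := by
    have := AddChar.sum_mulShift (R := ZMod p) (R' := ℂ) t (ZMod.isPrimitive_stdAddChar p)
    rw [if_neg ht] at this
    exact_mod_cast this
  have hone : ∑ d : ZMod p, (if d = 0 then (1 : ℂ) else 0) = 1 := by
    rw [Finset.sum_ite_eq' Finset.univ (0 : ZMod p) (fun _ => (1 : ℂ))]
    simp
  rw [hz, hone, gauss_shift ht]
  ring

end Aux2

section Aux3
variable {p : ℕ} [Fact p.Prime]

lemma card_chi (hp2 : p ≠ 2) {c : ℤ} (hc : c = 1 ∨ c = -1) :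
    (univ.filter (fun t : ZMod p => quadraticChar (ZMod p) t = c)).card = (p - 1) / 2 := by
  have hchar2 : ringChar (ZMod p) ≠ 2 := by rw [ZMod.ringChar_zmod_n]; exact hp2
  set χ := quadraticChar (ZMod p) with hχ
  set A := univ.filter (fun t : ZMod p => χ t = 1) with hA
  set B := univ.filter (fun t : ZMod p => χ t = -1) with hB
  obtain ⟨s, hs⟩ := quadraticChar_exists_neg_one hchar2
  have hs0 : s ≠ 0 := fun h => by simp [h, quadraticChar_zero, hχ] at hs
  have hAB : A.card = B.card := by
    refine Finset.card_bij (fun t _ => s * t) ?_ ?_ ?_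
    · intro a ha
      rw [hA, Finset.mem_filter] at ha
      rw [hB, Finset.mem_filter]
      refine ⟨Finset.mem_univ _, ?_⟩
      rw [map_mul, hs, ha.2, mul_one]
    · intro a _ b _ h
      exact mul_left_cancel₀ hs0 h
    · intro b hb
      rw [hB, Finset.mem_filter] at hb
      have hsi : χ s⁻¹ = -1 := by
        have h1 : χ s⁻¹ * χ s = 1 := by
          rw [← map_mul, inv_mul_cancel₀ hs0, map_one]
        rw [hs] at h1; linarith
      refine ⟨s⁻¹ * b, ?_, ?_⟩
      · rw [hA, Finset.mem_filter]
        refine ⟨Finset.mem_univ _, ?_⟩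
        rw [map_mul, hsi, hb.2]; ring
      · show s * (s⁻¹ * b) = b
        rw [mul_inv_cancel_left₀ hs0]
  have hdisj : Disjoint A B := by
    rw [Finset.disjoint_left]
    intro t htA htB
    rw [hA, Finset.mem_filter] at htA
    rw [hB, Finset.mem_filter] at htB
    rw [htA.2] at htB
    exact absurd htB.2 (by norm_num)
  have hsum : A.card + B.card = p - 1 := by
    rw [← Finset.card_union_of_disjoint hdisj]
    have hun : A ∪ B = univ.filter (fun t : ZMod p => t ≠ 0) := by
      ext t
      rw [Finset.mem_union, hA, hB, Finset.mem_filter, Finset.mem_filter, Finset.mem_filter]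
      constructor
      · rintro (⟨_, h⟩ | ⟨_, h⟩) <;>
          exact ⟨Finset.mem_univ _, fun h0 => by simp [h0, quadraticChar_zero, hχ] at h⟩
      · rintro ⟨_, h0⟩
        rcases quadraticChar_dichotomy h0 with h | h
        · exact Or.inl ⟨Finset.mem_univ _, h⟩
        · exact Or.inr ⟨Finset.mem_univ _, h⟩
    rw [hun, Finset.filter_ne', Finset.card_erase_of_mem (Finset.mem_univ 0),
      Finset.card_univ, ZMod.card]
  rcases hc with rfl | rfl
  · rw [← hA]; omega
  · rw [← hB]; omega

lemma natCard_set_chi (hp2 : p ≠ 2) (x : ZMod p) {c : ℤ} (hc : c = 1 ∨ c = -1) :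
    Nat.card {y : ZMod p | quadraticChar (ZMod p) (y - x) = c} = (p - 1) / 2 := by
  have h1 : Nat.card {y : ZMod p | quadraticChar (ZMod p) (y - x) = c}
      = Nat.card {t : ZMod p | quadraticChar (ZMod p) t = c} :=
    Nat.card_congr ((Equiv.subRight x).subtypeEquiv (fun y => Iff.rfl))
  rw [h1]
  simp only [Set.coe_setOf, Nat.card_eq_fintype_card, Fintype.card_subtype, Set.mem_setOf_eq]
  exact card_chi hp2 hc

end Aux3

lemma ang_eq_sqrt {m : ℕ} (hm : 0 < m) {a v : ℝ} (ha : 0 ≤ a) (h : ((m : ℝ) * a)^2 = v) :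
    a = (1 / (m : ℝ)) * Real.sqrt v := by
  have hmr : (0 : ℝ) < m := by exact_mod_cast hm
  have h2 : Real.sqrt v = m * a := by
    rw [← h, Real.sqrt_sq (by positivity)]
  rw [h2]; field_simp


end AuxiliaryLemmas

/-- Let `p` be an odd prime, `G = ZMod p`, `S` a `(p, m, λ, μ)`-Gaussian
difference set for `G` (a bidifference set relative to `R⁽²⁾_p ∪ {0}`), and `F` the
`G`-harmonic frame for `ℂ^m` generated by `S`.  Then either (1) `p ≡ 3 (mod 4)`, `S` is a
`(p, m, λ)`-difference set (in particular `λ = μ`), and `F` is an equiangular tight frame;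
or (2) `p ≡ 1 (mod 4)`, `λ = μ`, `S` is a `(p, m, λ)`-difference set, and `F` is an
equiangular tight frame; or (3) `p ≡ 1 (mod 4)`, `λ ≠ μ`, and `F` is a biangular tight
frame with the two frame angles `(1/m)√((m-λ) + (λ-μ)(1 ± √p)/2)`, each with frame angle
multiplicity `(p-1)/2`. -/
theorem statement15 (p : ℕ) [NeZero p] (hp : p.Prime) (hodd : Odd p)
    {m : ℕ} (hm : 0 < m) (g : Fin m → ZMod p) (hg : Function.Injective g) (lam mu : ℕ)
    (hlam : ∀ x ∈ insert (0 : ZMod p) (quadRes p), x ≠ 0 → diffCount g x = lam)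
    (hmu : ∀ x : ZMod p, x ∉ insert (0 : ZMod p) (quadRes p) → diffCount g x = mu) :
    (p % 4 = 3 ∧ lam = mu ∧ (∀ x : ZMod p, x ≠ 0 → diffCount g x = lam) ∧
      IsTightHarmZ p g ∧ (anglesSetZ p g).ncard = 1) ∨
    (p % 4 = 1 ∧ lam = mu ∧ (∀ x : ZMod p, x ≠ 0 → diffCount g x = lam) ∧
      IsTightHarmZ p g ∧ (anglesSetZ p g).ncard = 1) ∨
    (p % 4 = 1 ∧ lam ≠ mu ∧ IsTightHarmZ p g ∧ (anglesSetZ p g).ncard = 2 ∧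
      anglesSetZ p g =
        {(1 / (m : ℝ)) *
            Real.sqrt (((m : ℝ) - lam) + ((lam : ℝ) - mu) * (1 + Real.sqrt p) / 2),
         (1 / (m : ℝ)) *
            Real.sqrt (((m : ℝ) - lam) + ((lam : ℝ) - mu) * (1 - Real.sqrt p) / 2)} ∧
      (∀ x : ZMod p,
        Nat.card {y : ZMod p | y ≠ x ∧
            angZ p g x y = (1 / (m : ℝ)) *
              Real.sqrt (((m : ℝ) - lam) + ((lam : ℝ) - mu) * (1 + Real.sqrt p) / 2)} =
          (p - 1) / 2) ∧
      (∀ x : ZMod p,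
        Nat.card {y : ZMod p | y ≠ x ∧
            angZ p g x y = (1 / (m : ℝ)) *
              Real.sqrt (((m : ℝ) - lam) + ((lam : ℝ) - mu) * (1 - Real.sqrt p) / 2)} =
          (p - 1) / 2)) := by
  haveI hF : Fact p.Prime := ⟨hp⟩
  have hp2 : p ≠ 2 := by
    rintro rfl
    rw [Nat.odd_iff] at hodd
    omega
  have hp3 : 3 ≤ p := by have := hp.two_le; omega
  have hchar2 : ringChar (ZMod p) ≠ 2 := ringChar_ne_two hp2
  have h01 : (0 : ZMod p) ≠ 1 := zero_ne_one
  have htight : IsTightHarmZ p g := fun v => tightHarm hp hm g hg v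
  set χc := (quadraticChar (ZMod p)).ringHomComp (Int.castRingHom ℂ) with hχc
  set G := gaussSum χc ZMod.stdAddChar with hGdef
  have master : ∀ x y : ZMod p, x ≠ y →
      2 * (m : ℂ)^2 * ((angZ p g x y : ℝ) : ℂ)^2
        = 2 * (m : ℂ) - ((lam : ℂ) + mu)
          + ((lam : ℂ) - mu) * ((quadraticChar (ZMod p) (y - x) : ℤ) : ℂ) * G := by
    intro x y hxy
    have hb := base_identity hp hm g x y
    have he := eval_sum hp hp2 g hg lam mu hlam hmu (t := y - x) (sub_ne_zero.mpr hxy.symm)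
    rw [hGdef, hχc]
    linear_combination 2 * hb + he
  by_cases hlm : lam = mu
  · -- equiangular cases
    subst hlm
    have hconst : ∀ x : ZMod p, x ≠ 0 → diffCount g x = lam := by
      intro d hd
      by_cases h : d ∈ insert (0 : ZMod p) (quadRes p)
      · exact hlam d h hd
      · exact hmu d h
    have hangconst : ∀ x y : ZMod p, x ≠ y →
        angZ p g x y = (1 / (m : ℝ)) * Real.sqrt ((m : ℝ) - lam) := by
      intro x y hxy
      refine ang_eq_sqrt hm (norm_nonneg _) ?_
      have h1 := master x y hxy
      rw [← Complex.ofReal_inj]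
      push_cast
      linear_combination h1 / 2
    have hncard : (anglesSetZ p g).ncard = 1 := by
      have hset : anglesSetZ p g = {(1 / (m : ℝ)) * Real.sqrt ((m : ℝ) - lam)} := by
        ext r
        constructor
        · rintro ⟨x, y, hxy, rfl⟩
          exact hangconst x y hxy
        · intro hr
          rw [Set.mem_singleton_iff] at hr
          exact ⟨0, 1, h01, (hangconst 0 1 h01).trans hr.symm⟩
      rw [hset, Set.ncard_singleton]
    have h4 : p % 4 = 3 ∨ p % 4 = 1 := by
      rw [Nat.odd_iff] at hodd
      omega
    rcases h4 with h4 | h4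
    · exact Or.inl ⟨h4, rfl, hconst, htight, hncard⟩
    · exact Or.inr (Or.inl ⟨h4, rfl, hconst, htight, hncard⟩)
  · -- biangular case
    refine Or.inr (Or.inr ?_)
    have hlmR : (lam : ℝ) ≠ (mu : ℝ) := fun h => hlm (by exact_mod_cast h)
    have hlmC : ((lam : ℂ) - mu) ≠ 0 := by
      rw [sub_ne_zero]
      exact fun h => hlm (by exact_mod_cast h)
    -- G is real
    set rG : ℝ := (2 * (m : ℝ)^2 * (angZ p g 0 1)^2 - 2 * m + (lam + mu)) / ((lam : ℝ) - mu)
      with hrGdef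
    have hGr : G = (rG : ℂ) := by
      have h1 := master 0 1 h01
      rw [sub_zero, map_one] at h1
      rw [hrGdef]
      push_cast
      rw [eq_div_iff (by rw [sub_ne_zero]; exact fun h => hlm (by exact_mod_cast h))]
      simp only [Int.cast_one, one_mul] at h1
      linear_combination -h1
    -- Gauss sum square
    have hχquad : χc.IsQuadratic := (quadraticChar_isQuadratic (ZMod p)).comp _
    have hχne : χc ≠ 1 := by
      intro h
      obtain ⟨a, ha⟩ := quadraticChar_exists_neg_one' hchar2
      have h1 : χc (a : ZMod p) = 1 := by rw [h]; exact MulChar.one_apply_coe a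
      have h2 : χc (a : ZMod p) = -1 := by
        show ((quadraticChar (ZMod p) (a : ZMod p) : ℤ) : ℂ) = -1
        rw [ha]; norm_num
      rw [h1] at h2
      norm_num at h2
    have hGsq : G^2 = χc (-1) * p := by
      rw [hGdef, gaussSum_sq hχne hχquad (ZMod.isPrimitive_stdAddChar p), ZMod.card]
    have h41 : p % 4 = 1 := by
      have h4 : p % 4 = 3 ∨ p % 4 = 1 := by rw [Nat.odd_iff] at hodd; omega
      rcases h4 with h4 | h4
      · exfalso
        have hns : ¬ IsSquare (-1 : ZMod p) := by
          rw [ZMod.exists_sq_eq_neg_one_iff]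
          simp [h4]
        have hχm1 : quadraticChar (ZMod p) (-1) = -1 :=
          quadraticChar_neg_one_iff_not_isSquare.mpr hns
        have hG2 : G^2 = -(p : ℂ) := by
          rw [hGsq]
          show ((quadraticChar (ZMod p) (-1) : ℤ) : ℂ) * p = -(p : ℂ)
          rw [hχm1]; push_cast; ring
        rw [hGr] at hG2
        have : (rG^2 : ℝ) = -(p : ℝ) := by exact_mod_cast hG2
        nlinarith [sq_nonneg rG, show (3:ℝ) ≤ p by exact_mod_cast hp3]
      · exact h4
    have hχm1 : quadraticChar (ZMod p) (-1) = 1 := by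
      refine (quadraticChar_one_iff_isSquare (neg_ne_zero.mpr one_ne_zero)).mpr ?_
      rw [ZMod.exists_sq_eq_neg_one_iff]
      omega
    have hrGsq : rG^2 = (p : ℝ) := by
      have h1 : G^2 = (p : ℂ) := by
        rw [hGsq]
        show ((quadraticChar (ZMod p) (-1) : ℤ) : ℂ) * p = (p : ℂ)
        rw [hχm1]; push_cast; ring
      rw [hGr] at h1
      exact_mod_cast h1
    have hsqp : Real.sqrt p > 0 := Real.sqrt_pos.mpr (by positivity)
    have hrG : rG = Real.sqrt p ∨ rG = -Real.sqrt p := by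
      have habs : |rG| = Real.sqrt p := by
        rw [← Real.sqrt_sq_eq_abs, hrGsq]
      exact (abs_eq (Real.sqrt_nonneg _)).mp habs
    set vP : ℝ := ((m : ℝ) - lam) + ((lam : ℝ) - mu) * (1 + Real.sqrt p) / 2 with hvP
    set vM : ℝ := ((m : ℝ) - lam) + ((lam : ℝ) - mu) * (1 - Real.sqrt p) / 2 with hvM
    -- the real master identity
    have hreal : ∀ x y : ZMod p, x ≠ y →
        ((m : ℝ) * angZ p g x y)^2
          = ((m : ℝ) - lam)
            + ((lam : ℝ) - mu) * (1 + ((quadraticChar (ZMod p) (y - x) : ℤ) : ℝ) * rG) / 2 := by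
      intro x y hxy
      have h1 := master x y hxy
      rw [hGr] at h1
      rw [← Complex.ofReal_inj]
      push_cast
      linear_combination h1 / 2
    have hangPM : ∀ x y : ZMod p, x ≠ y →
        (((quadraticChar (ZMod p) (y - x) : ℤ) : ℝ) * rG = Real.sqrt p ∧
          angZ p g x y = (1 / (m : ℝ)) * Real.sqrt vP) ∨
        (((quadraticChar (ZMod p) (y - x) : ℤ) : ℝ) * rG = -Real.sqrt p ∧
          angZ p g x y = (1 / (m : ℝ)) * Real.sqrt vM) := by
      intro x y hxy
      have hd := quadraticChar_dichotomy (F := ZMod p) (sub_ne_zero.mpr hxy.symm)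
      have hr1 := hreal x y hxy
      have hcase : ((quadraticChar (ZMod p) (y - x) : ℤ) : ℝ) * rG = Real.sqrt p ∨
          ((quadraticChar (ZMod p) (y - x) : ℤ) : ℝ) * rG = -Real.sqrt p := by
        rcases hd with h | h <;> rcases hrG with h2 | h2 <;> rw [h, h2] <;> push_cast <;>
          [left; right; right; left] <;> ring
      rcases hcase with h | h
      · refine Or.inl ⟨h, ?_⟩
        refine ang_eq_sqrt hm (norm_nonneg _) ?_
        rw [h] at hr1
        rw [hr1, hvP]
      · refine Or.inr ⟨h, ?_⟩
        refine ang_eq_sqrt hm (norm_nonneg _) ?_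
        rw [h] at hr1
        rw [hr1, hvM]
        ring
    -- witnesses for both signs
    obtain ⟨s, hsχ⟩ := quadraticChar_exists_neg_one hchar2
    have hs0 : s ≠ 0 := fun h => by
      rw [h, quadraticChar_zero] at hsχ; norm_num at hsχ
    have hwit : ∀ c : ℝ, c = Real.sqrt p ∨ c = -Real.sqrt p →
        ∃ x y : ZMod p, x ≠ y ∧ ((quadraticChar (ZMod p) (y - x) : ℤ) : ℝ) * rG = c := by
      intro c hc
      rcases hrG with h2 | h2 <;> rcases hc with rfl | rfl
      · exact ⟨0, 1, h01, by rw [sub_zero, map_one, h2]; norm_num⟩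
      · exact ⟨0, s, hs0.symm, by rw [sub_zero, hsχ, h2]; push_cast; ring⟩
      · exact ⟨0, s, hs0.symm, by rw [sub_zero, hsχ, h2]; push_cast; ring⟩
      · exact ⟨0, 1, h01, by rw [sub_zero, map_one, h2]; norm_num⟩
    have hangwit : ∀ c : ℝ, c = Real.sqrt p ∨ c = -Real.sqrt p →
        ∃ x y : ZMod p, x ≠ y ∧ ((quadraticChar (ZMod p) (y - x) : ℤ) : ℝ) * rG = c ∧
          ((m : ℝ) * angZ p g x y)^2
            = ((m : ℝ) - lam) + ((lam : ℝ) - mu) * (1 + c) / 2 := by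
      intro c hc
      obtain ⟨x, y, hxy, hcx⟩ := hwit c hc
      refine ⟨x, y, hxy, hcx, ?_⟩
      have := hreal x y hxy
      rw [hcx] at this
      exact this
    have hvPnn : 0 ≤ vP := by
      obtain ⟨x, y, hxy, _, h⟩ := hangwit _ (Or.inl rfl)
      rw [hvP, ← h]
      positivity
    have hvMnn : 0 ≤ vM := by
      obtain ⟨x, y, hxy, _, h⟩ := hangwit _ (Or.inr rfl)
      have h2 : vM = ((m : ℝ) * angZ p g x y)^2 := by rw [hvM, h]; ring
      rw [h2]
      positivity
    have hvne : vP ≠ vM := by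
      rw [hvP, hvM]
      intro h
      have h2 : ((lam : ℝ) - mu) * Real.sqrt p = 0 := by linarith
      rcases mul_eq_zero.mp h2 with h3 | h3
      · exact hlmR (by linarith [sub_eq_zero.mp h3])
      · exact absurd h3 (ne_of_gt hsqp)
    have hAne : (1 / (m : ℝ)) * Real.sqrt vP ≠ (1 / (m : ℝ)) * Real.sqrt vM := by
      intro h
      apply hvne
      have hmne : (1 / (m : ℝ)) ≠ 0 := by positivity
      have h1 : Real.sqrt vP = Real.sqrt vM := mul_left_cancel₀ hmne h
      calc vP = Real.sqrt vP ^ 2 := (Real.sq_sqrt hvPnn).symm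
        _ = Real.sqrt vM ^ 2 := by rw [h1]
        _ = vM := Real.sq_sqrt hvMnn
    have hset : anglesSetZ p g
        = {(1 / (m : ℝ)) * Real.sqrt vP, (1 / (m : ℝ)) * Real.sqrt vM} := by
      ext r
      constructor
      · rintro ⟨x, y, hxy, rfl⟩
        rcases hangPM x y hxy with ⟨_, h⟩ | ⟨_, h⟩
        · exact Or.inl h
        · exact Or.inr h
      · intro hr
        rcases hr with rfl | rfl
        · obtain ⟨x, y, hxy, hcx⟩ := hwit _ (Or.inl rfl)
          refine ⟨x, y, hxy, ?_⟩
          rcases hangPM x y hxy with ⟨_, h⟩ | ⟨hc, _⟩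
          · exact h
          · rw [hcx] at hc
            exact absurd hc (by intro hh; have := hsqp; linarith)
        · obtain ⟨x, y, hxy, hcx⟩ := hwit _ (Or.inr rfl)
          refine ⟨x, y, hxy, ?_⟩
          rcases hangPM x y hxy with ⟨hc, _⟩ | ⟨_, h⟩
          · rw [hcx] at hc
            exact absurd hc.symm (by intro hh; have := hsqp; linarith)
          · exact h
    have hncard : (anglesSetZ p g).ncard = 2 := by
      rw [hset]
      exact Set.ncard_pair hAne
    -- multiplicities
    have hmul : ∀ (x : ZMod p) (c : ℝ) (v : ℝ), c = Real.sqrt p ∨ c = -Real.sqrt p →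
        (0 ≤ v) →
        (∀ y : ZMod p, x ≠ y →
          (((quadraticChar (ZMod p) (y - x) : ℤ) : ℝ) * rG = c ↔
            angZ p g x y = (1 / (m : ℝ)) * Real.sqrt v)) →
        Nat.card {y : ZMod p | y ≠ x ∧ angZ p g x y = (1 / (m : ℝ)) * Real.sqrt v}
          = (p - 1) / 2 := by
      intro x c v hc hv hiff
      obtain ⟨e, he1, he2⟩ : ∃ e : ℤ, (e = 1 ∨ e = -1) ∧ (e : ℝ) * rG = c := by
        rcases hrG with h2 | h2 <;> rcases hc with rfl | rfl
        · exact ⟨1, Or.inl rfl, by rw [h2]; norm_num⟩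
        · exact ⟨-1, Or.inr rfl, by rw [h2]; push_cast; ring⟩
        · exact ⟨-1, Or.inr rfl, by rw [h2]; push_cast; ring⟩
        · exact ⟨1, Or.inl rfl, by rw [h2]; norm_num⟩
      have hsetc : {y : ZMod p | y ≠ x ∧ angZ p g x y = (1 / (m : ℝ)) * Real.sqrt v}
          = {y : ZMod p | quadraticChar (ZMod p) (y - x) = e} := by
        ext y
        simp only [Set.mem_setOf_eq]
        constructor
        · rintro ⟨hyx, hay⟩
          have hxy : x ≠ y := hyx.symm
          have hχy := (hiff y hxy).mpr hay
          rcases quadraticChar_dichotomy (F := ZMod p) (sub_ne_zero.mpr hyx) with h | h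
          · rcases he1 with rfl | rfl
            · exact h
            · exfalso
              rw [h] at hχy
              push_cast at hχy he2
              have : rG = -rG := by linarith
              have : rG = 0 := by linarith
              rw [this] at hrGsq
              nlinarith [show (3:ℝ) ≤ p by exact_mod_cast hp3]
          · rcases he1 with rfl | rfl
            · exfalso
              rw [h] at hχy
              push_cast at hχy he2
              have : rG = -rG := by linarith
              have : rG = 0 := by linarith
              rw [this] at hrGsq
              nlinarith [show (3:ℝ) ≤ p by exact_mod_cast hp3]
            · exact h
        · intro hχy
          have hyx : y ≠ x := by
            intro h
            rw [h, sub_self, quadraticChar_zero] at hχy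
            rcases he1 with rfl | rfl <;> norm_num at hχy
          refine ⟨hyx, ?_⟩
          refine (hiff y hyx.symm).mp ?_
          rw [hχy]
          exact he2
      rw [hsetc]
      exact natCard_set_chi hp2 x he1
    have hiffP : ∀ x : ZMod p, ∀ y : ZMod p, x ≠ y →
        (((quadraticChar (ZMod p) (y - x) : ℤ) : ℝ) * rG = Real.sqrt p ↔
          angZ p g x y = (1 / (m : ℝ)) * Real.sqrt vP) := by
      intro x y hxy
      constructor
      · intro h
        rcases hangPM x y hxy with ⟨_, h2⟩ | ⟨hc, _⟩
        · exact h2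
        · rw [h] at hc; exact absurd hc (by intro hh; linarith)
      · intro h
        rcases hangPM x y hxy with ⟨hc, _⟩ | ⟨hc, h2⟩
        · exact hc
        · rw [h] at h2; exact absurd h2 hAne
    have hiffM : ∀ x : ZMod p, ∀ y : ZMod p, x ≠ y →
        (((quadraticChar (ZMod p) (y - x) : ℤ) : ℝ) * rG = -Real.sqrt p ↔
          angZ p g x y = (1 / (m : ℝ)) * Real.sqrt vM) := by
      intro x y hxy
      constructor
      · intro h
        rcases hangPM x y hxy with ⟨hc, _⟩ | ⟨_, h2⟩
        · rw [h] at hc; exact absurd hc.symm (by intro hh; linarith)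
        · exact h2
      · intro h
        rcases hangPM x y hxy with ⟨hc, h2⟩ | ⟨hc, _⟩
        · rw [h] at h2; exact absurd h2.symm hAne
        · exact hc
    refine ⟨h41, hlm, htight, hncard, hset, ?_, ?_⟩
    · intro x
      exact hmul x (Real.sqrt p) vP (Or.inl rfl) hvPnn (fun y hxy => hiffP x y hxy)
    · intro x
      exact hmul x (-Real.sqrt p) vM (Or.inr rfl) hvMnn (fun y hxy => hiffM x y hxy)
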